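/- Let x₁, …, x_M be M vectors (stimuli contents) lying in the closed ball in ℝⁿ with centre c and radius ρ > 0. Let 0 < ψ < 1, 1/2 < α < 1, and M < ψ (2α)ⁿ. Let x_{M+1} be sampled from the uniform (equi-)distribution in this ball. Define w = x_{M+1} − c and θ = α (w, w) + (w, c). Then with probability greater than 1 − ψ the linear threshold neuron (w, θ) detects selectively the stimulus x_{M+1} and rejects all other stimuli: (w, x_{M+1}) > θ and (w, xᵢ) ≤ θ for all i = 1, …, M. -/

import Mathlib

open MeasureTheory RealInnerProductSpace

theorem single_neuron_selectivity
    (n M : ℕ) (hn : 0 < n)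
    (c : EuclideanSpace ℝ (Fin n)) (R : ℝ) (hR : 0 < R)
    (x : Fin M → EuclideanSpace ℝ (Fin n))
    (hx : ∀ i, x i ∈ Metric.closedBall c R)
    (ψ α : ℝ) (hψ : 0 < ψ) (hψ1 : ψ < 1) (hα : 1 / 2 < α) (hα1 : α < 1)
    (hM : (M : ℝ) < ψ * (2 * α) ^ n)
    (μ : Measure (EuclideanSpace ℝ (Fin n)))
    (hμ : μ = (volume (Metric.closedBall c R))⁻¹ • volume.restrict (Metric.closedBall c R)) :
    (μ {z | ⟪z - c, z⟫ > α * ⟪z - c, z - c⟫ + ⟪z - c, c⟫ ∧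
        ∀ i : Fin M, ⟪z - c, x i⟫ ≤ α * ⟪z - c, z - c⟫ + ⟪z - c, c⟫}).toReal >
      1 - ψ := by
  have hα0 : (0:ℝ) < α := by linarith
  have h2α : (0:ℝ) < 2 * α := by linarith
  set S := Metric.closedBall c R with hS
  set G : Set (EuclideanSpace ℝ (Fin n)) :=
    {z | ⟪z - c, z⟫ > α * ⟪z - c, z - c⟫ + ⟪z - c, c⟫ ∧
        ∀ i : Fin M, ⟪z - c, x i⟫ ≤ α * ⟪z - c, z - c⟫ + ⟪z - c, c⟫} with hG
  -- measurability
  have hcont1 : Continuous fun z : EuclideanSpace ℝ (Fin n) => ⟪z - c, z⟫ :=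
    Continuous.inner (continuous_id.sub continuous_const) continuous_id
  have hcont2 : Continuous fun z : EuclideanSpace ℝ (Fin n) =>
      α * ⟪z - c, z - c⟫ + ⟪z - c, c⟫ := by
    exact (continuous_const.mul (Continuous.inner (continuous_id.sub continuous_const)
      (continuous_id.sub continuous_const))).add
      (Continuous.inner (continuous_id.sub continuous_const) continuous_const)
  have hGmeas : MeasurableSet G := by
    have h1 : MeasurableSet {z : EuclideanSpace ℝ (Fin n) |
        α * ⟪z - c, z - c⟫ + ⟪z - c, c⟫ < ⟪z - c, z⟫} :=
      measurableSet_lt hcont2.measurable hcont1.measurable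
    have h2 : MeasurableSet (⋂ i : Fin M, {z : EuclideanSpace ℝ (Fin n) |
        ⟪z - c, x i⟫ ≤ α * ⟪z - c, z - c⟫ + ⟪z - c, c⟫}) := by
      refine MeasurableSet.iInter fun i => ?_
      exact measurableSet_le
        (Continuous.inner (continuous_id.sub continuous_const) continuous_const).measurable
        hcont2.measurable
    have : G = {z | α * ⟪z - c, z - c⟫ + ⟪z - c, c⟫ < ⟪z - c, z⟫} ∩
        ⋂ i : Fin M, {z | ⟪z - c, x i⟫ ≤ α * ⟪z - c, z - c⟫ + ⟪z - c, c⟫} := by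
      ext z
      simp only [hG, Set.mem_setOf_eq, Set.mem_inter_iff, Set.mem_iInter, gt_iff_lt]
    rw [this]; exact h1.inter h2
  -- volume facts
  have hV0 : volume S ≠ 0 := (Metric.measure_closedBall_pos volume c hR).ne'
  have hVtop : volume S ≠ ⊤ := (isCompact_closedBall c R).measure_lt_top.ne
  -- the caps
  set B : Fin M → Set (EuclideanSpace ℝ (Fin n)) :=
    fun i => Metric.closedBall (c + (2 * α)⁻¹ • (x i - c)) (R / (2 * α)) with hB
  -- inclusion of the bad set
  have hsub : Gᶜ ∩ S ⊆ {c} ∪ ⋃ i, B i := by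
    rintro z ⟨hzG, hzS⟩
    rcases not_and_or.mp hzG with h | h
    · left
      push_neg at h
      have hid : ⟪z - c, z⟫ = ⟪z - c, z - c⟫ + ⟪z - c, c⟫ := by
        rw [← inner_add_right]; congr 1; abel
      have hw : ⟪z - c, z - c⟫ = ‖z - c‖ ^ 2 := real_inner_self_eq_norm_sq (z - c)
      have h0 : (1 - α) * ‖z - c‖ ^ 2 ≤ 0 := by nlinarith [h, hid, hw]
      have hz1 : ‖z - c‖ ^ 2 = 0 := le_antisymm (by nlinarith) (sq_nonneg _)
      have hz0 : ‖z - c‖ = 0 := by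
        have := pow_eq_zero_iff (n := 2) two_ne_zero |>.mp hz1
        exact this
      have : z - c = 0 := norm_eq_zero.mp hz0
      simp [sub_eq_zero.mp this]
    · right
      push_neg at h
      obtain ⟨i, hi⟩ := h
      refine Set.mem_iUnion.mpr ⟨i, ?_⟩
      rw [hB]
      simp only [Metric.mem_closedBall, dist_eq_norm]
      set w := z - c with hwdef
      set y := x i - c with hydef
      have hyR : ‖y‖ ≤ R := by
        have := hx i
        simpa [hS, hydef, dist_eq_norm] using this
      have hiy : α * ⟪w, w⟫ < ⟪w, y⟫ := by
        have hid : ⟪w, x i⟫ = ⟪w, y⟫ + ⟪w, c⟫ := by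
          rw [← inner_add_right]; congr 1; rw [hydef]; abel
        linarith [hi, hid]
      have hzeq : z - (c + (2 * α)⁻¹ • y) = w - (2 * α)⁻¹ • y := by
        rw [hwdef]; abel
      rw [hzeq]
      have hsq : ‖w - (2 * α)⁻¹ • y‖ ^ 2 ≤ (R / (2 * α)) ^ 2 := by
        have hns : ‖w - (2 * α)⁻¹ • y‖ ^ 2
            = ‖w‖ ^ 2 - 2 * ⟪w, (2 * α)⁻¹ • y⟫ + ‖(2 * α)⁻¹ • y‖ ^ 2 :=
          norm_sub_sq_real w _
        have h1 : ⟪w, (2 * α)⁻¹ • y⟫ = (2 * α)⁻¹ * ⟪w, y⟫ := real_inner_smul_right w y _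
        have h2 : ‖(2 * α)⁻¹ • y‖ = (2 * α)⁻¹ * ‖y‖ := by
          rw [norm_smul, Real.norm_eq_abs, abs_of_pos (inv_pos.mpr h2α)]
        have hww : ⟪w, w⟫ = ‖w‖ ^ 2 := real_inner_self_eq_norm_sq w
        rw [hns, h1, h2]
        have hα2 : (2 * α)⁻¹ * (2 * α) = 1 := inv_mul_cancel₀ h2α.ne'
        have hy2 : ((2 * α)⁻¹ * ‖y‖) ^ 2 ≤ (R / (2 * α)) ^ 2 := by
          rw [div_eq_inv_mul]
          have hmul : (2 * α)⁻¹ * ‖y‖ ≤ (2 * α)⁻¹ * R :=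
            mul_le_mul_of_nonneg_left hyR (le_of_lt (inv_pos.mpr h2α))
          exact pow_le_pow_left₀ (by positivity) hmul 2
        nlinarith [hiy, hww, hy2, inv_pos.mpr h2α]
      have hRpos : 0 ≤ R / (2 * α) := le_of_lt (div_pos hR h2α)
      exact (pow_le_pow_iff_left₀ (norm_nonneg _) hRpos two_ne_zero).mp hsq
  -- volume of each cap
  have hfr : Module.finrank ℝ (EuclideanSpace ℝ (Fin n)) = n := finrank_euclideanSpace_fin
  have hc0 : volume ({c} : Set (EuclideanSpace ℝ (Fin n))) = 0 := by
    have h := Measure.addHaar_closedBall (volume) c (le_refl (0:ℝ))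
    rw [Metric.closedBall_zero] at h
    rw [h, hfr, zero_pow hn.ne', ENNReal.ofReal_zero, zero_mul]
  set u := volume (Metric.ball (0 : EuclideanSpace ℝ (Fin n)) 1) with hu
  have hVeq : volume S = ENNReal.ofReal (R ^ n) * u := by
    rw [hS, Measure.addHaar_closedBall volume c hR.le, hfr]
  have hBvol : ∀ i, volume (B i) = ENNReal.ofReal ((R / (2 * α)) ^ n) * u := by
    intro i
    rw [hB, Measure.addHaar_closedBall volume _ (le_of_lt (div_pos hR h2α)), hfr]
  -- bound the bad volume
  have hbad : volume (Gᶜ ∩ S) ≤ ENNReal.ofReal ((M : ℝ) * ((2 * α) ^ n)⁻¹) * volume S := by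
    calc volume (Gᶜ ∩ S) ≤ volume ({c} ∪ ⋃ i, B i) := measure_mono hsub
      _ ≤ volume ({c} : Set (EuclideanSpace ℝ (Fin n))) + volume (⋃ i, B i) :=
          measure_union_le _ _
      _ = volume (⋃ i, B i) := by
          rw [hc0, zero_add]
      _ ≤ ∑ i : Fin M, volume (B i) := measure_iUnion_fintype_le volume B
      _ = (M : ENNReal) * (ENNReal.ofReal ((R / (2 * α)) ^ n) * u) := by
          simp [hBvol, Finset.sum_const, Finset.card_univ, nsmul_eq_mul]
      _ = ENNReal.ofReal ((M : ℝ) * ((2 * α) ^ n)⁻¹) * volume S := by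
          rw [hVeq]
          rw [← ENNReal.ofReal_natCast M, ← mul_assoc, ← ENNReal.ofReal_mul (by positivity),
            ← mul_assoc, ← ENNReal.ofReal_mul (by positivity)]
          congr 2
          rw [div_pow]
          field_simp
  -- probability computations
  have hμG : μ Gᶜ ≤ ENNReal.ofReal ((M : ℝ) * ((2 * α) ^ n)⁻¹) := by
    rw [hμ]
    rw [Measure.smul_apply, smul_eq_mul, Measure.restrict_apply hGmeas.compl]
    calc (volume S)⁻¹ * volume (Gᶜ ∩ S)
        ≤ (volume S)⁻¹ * (ENNReal.ofReal ((M : ℝ) * ((2 * α) ^ n)⁻¹) * volume S) := by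
          gcongr
      _ = ENNReal.ofReal ((M : ℝ) * ((2 * α) ^ n)⁻¹) * ((volume S)⁻¹ * volume S) := by ring
      _ = ENNReal.ofReal ((M : ℝ) * ((2 * α) ^ n)⁻¹) := by
          rw [ENNReal.inv_mul_cancel hV0 hVtop, mul_one]
  have huniv : μ Set.univ = 1 := by
    rw [hμ, Measure.smul_apply, smul_eq_mul, Measure.restrict_apply MeasurableSet.univ,
      Set.univ_inter, ENNReal.inv_mul_cancel hV0 hVtop]
  have hsum : μ G + μ Gᶜ = 1 := by rw [measure_add_measure_compl hGmeas, huniv]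
  have hGc_ne : μ Gᶜ ≠ ⊤ := by
    intro h; rw [h] at hsum; simp at hsum
  have hG_ne : μ G ≠ ⊤ := by
    intro h; rw [h] at hsum; simp at hsum
  have htoReal : (μ G).toReal + (μ Gᶜ).toReal = 1 := by
    rw [← ENNReal.toReal_add hG_ne hGc_ne, hsum]; simp
  have hbound : (μ Gᶜ).toReal ≤ (M : ℝ) * ((2 * α) ^ n)⁻¹ := by
    have := ENNReal.toReal_mono ENNReal.ofReal_ne_top hμG
    rwa [ENNReal.toReal_ofReal (by positivity)] at this
  have hlt : (M : ℝ) * ((2 * α) ^ n)⁻¹ < ψ := by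
    rw [mul_inv_lt_iff₀ (by positivity)]
    linarith [hM]
  linarith [htoReal, hbound, hlt]
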